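/- Let L be the operator (Ly)(x) = (-ε²y₁''(x) + b₁₁(x)y₁(x) + b₁₂(x)y₂(x), -μ²y₂''(x) + b₂₁(x)y₁(x) + b₂₂(x)y₂(x)) on (0,1), with b₁₂, b₂₁ ≤ 0 and λ² < min{b₁₁+b₁₂, b₂₁+b₂₂} on [0,1]. Suppose y = (y₁,y₂) is C² on (0,1), continuous on [0,1], satisfies the Robin conditions α_k y_k(0) - c_k β_k y_k'(0) ≥ 0 and γ_k y_k(1) + c_k δ_k y_k'(1) ≥ 0 (k = 1,2, with c₁ = ε, c₂ = μ, α_k,β_k ≥ 0, α_k+β_k > 0, γ_k > 0, δ_k ≥ 0), and Ly ≥ 0 componentwise on (0,1). Then y₁(x) ≥ 0 and y₂(x) ≥ 0 for all x ∈ [0,1]. -/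

import Mathlib

open Set Filter Real Topology

lemma deriv_nonneg_left (f : ℝ → ℝ) (d : ℝ) (hf : HasDerivAt f d 0)
    (hmin : ∀ z ∈ Set.Icc (0:ℝ) 1, f 0 ≤ f z) : 0 ≤ d := by
  have h1 : Tendsto (slope f 0) (𝓝[>] (0:ℝ)) (𝓝 d) :=
    (hasDerivAt_iff_tendsto_slope.mp hf).mono_left
      (nhdsWithin_mono _ (fun z hz => ne_of_gt hz))
  refine ge_of_tendsto h1 ?_
  filter_upwards [Ioo_mem_nhdsGT_of_mem (⟨le_refl (0:ℝ), one_pos⟩ : (0:ℝ) ∈ Set.Ico (0:ℝ) 1)]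
    with z hz
  have hz0 : 0 < z := hz.1
  have : f 0 ≤ f z := hmin z ⟨le_of_lt hz0, le_of_lt hz.2⟩
  rw [slope_def_field]
  have : 0 ≤ f z - f 0 := by linarith
  have : 0 ≤ (f z - f 0) / (z - 0) := div_nonneg this (by linarith)
  simpa [div_eq_iff] using this

lemma deriv_nonpos_right (f : ℝ → ℝ) (d : ℝ) (hf : HasDerivAt f d 1)
    (hmin : ∀ z ∈ Set.Icc (0:ℝ) 1, f 1 ≤ f z) : d ≤ 0 := by
  have h1 : Tendsto (slope f 1) (𝓝[<] (1:ℝ)) (𝓝 d) :=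
    (hasDerivAt_iff_tendsto_slope.mp hf).mono_left
      (nhdsWithin_mono _ (fun z hz => ne_of_lt hz))
  refine le_of_tendsto h1 ?_
  filter_upwards [Ioo_mem_nhdsLT_of_mem (⟨zero_lt_one, le_refl (1:ℝ)⟩ : (1:ℝ) ∈ Set.Ioc (0:ℝ) 1)]
    with z hz
  have : f 1 ≤ f z := hmin z ⟨le_of_lt hz.1, le_of_lt hz.2⟩
  rw [slope_def_field]
  have h2 : z - 1 < 0 := by linarith [hz.2]
  exact div_nonpos_of_nonneg_of_nonpos (by linarith) (le_of_lt h2)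

lemma second_deriv_nonneg (f f' : ℝ → ℝ) (f'' x : ℝ) (hx : x ∈ Set.Ioo (0:ℝ) 1)
    (hd : ∀ z ∈ Set.Ioo (0:ℝ) 1, HasDerivAt f (f' z) z)
    (hdd : HasDerivAt f' f'' x)
    (hmin : ∀ z ∈ Set.Icc (0:ℝ) 1, f x ≤ f z) : 0 ≤ f'' := by
  have hxIoo : Set.Ioo (0:ℝ) 1 ∈ 𝓝 x := isOpen_Ioo.mem_nhds hx
  have hloc : IsLocalMin f x := by
    filter_upwards [hxIoo] with z hz
    exact hmin z ⟨le_of_lt hz.1, le_of_lt hz.2⟩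
  have hf'x : f' x = 0 := hloc.hasDerivAt_eq_zero (hd x hx)
  by_contra h
  push_neg at h
  have h1 : Tendsto (slope f' x) (𝓝[>] x) (𝓝 f'') :=
    (hasDerivAt_iff_tendsto_slope.mp hdd).mono_left
      (nhdsWithin_mono _ (fun z hz => ne_of_gt hz))
  have h2 : ∀ᶠ z in 𝓝[>] x, slope f' x z < 0 := h1.eventually_lt_const h
  have h3 : Ioo x 1 ∈ 𝓝[>] x := Ioo_mem_nhdsGT_of_mem ⟨le_refl x, hx.2⟩
  obtain ⟨b, hb, hsub⟩ := (nhdsGT_basis x).mem_iff.mp (h2.and h3)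
  set z0 : ℝ := (x + min b 1) / 2 with hz0def
  have hxb : x < min b 1 := lt_min hb hx.2
  have hxz0 : x < z0 := by simp only [hz0def]; linarith
  have hz0b : z0 < min b 1 := by simp only [hz0def]; linarith
  have hz01 : z0 < 1 := lt_of_lt_of_le hz0b (min_le_right _ _)
  have hsubIcc : Set.Icc x z0 ⊆ Set.Ioo (0:ℝ) 1 := fun z hz =>
    ⟨lt_of_lt_of_le hx.1 hz.1, lt_of_le_of_lt hz.2 hz01⟩
  have hcont : ContinuousOn f (Set.Icc x z0) := fun z hz =>
    ((hd z (hsubIcc hz)).continuousAt).continuousWithinAt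
  have hanti : StrictAntiOn f (Set.Icc x z0) := by
    refine strictAntiOn_of_deriv_neg (convex_Icc x z0) hcont ?_
    intro z hz
    rw [interior_Icc] at hz
    have hzb : z ∈ Ioo x b := ⟨hz.1, lt_of_lt_of_le (lt_of_lt_of_le hz.2 hz0b.le) (min_le_left _ _)⟩
    have hslope := (hsub hzb).1
    rw [slope_def_field, hf'x] at hslope
    have hzx : 0 < z - x := by linarith [hz.1]
    have hfz : f' z < 0 := by
      by_contra hge
      push_neg at hge
      have : 0 ≤ (f' z - 0) / (z - x) := div_nonneg (by linarith) hzx.le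
      linarith
    rwa [(hd z (hsubIcc ⟨hz.1.le, hz.2.le⟩)).deriv]
  have : f z0 < f x := hanti ⟨le_refl x, hxz0.le⟩ ⟨hxz0.le, le_refl z0⟩ hxz0
  have hz0Icc : z0 ∈ Set.Icc (0:ℝ) 1 := ⟨by linarith [hx.1], hz01.le⟩
  linarith [hmin z0 hz0Icc]

lemma tf_hasDeriv (lam x : ℝ) :
    HasDerivAt (fun z => Real.cosh (lam * (z - 1/2))) (lam * Real.sinh (lam * (x - 1/2))) x := by
  have h1 : HasDerivAt (fun z : ℝ => lam * (z - 1/2)) lam x := by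
    exact (((hasDerivAt_id x).sub_const (1/2)).const_mul lam).congr_deriv (by ring)
  exact ((Real.hasDerivAt_cosh (lam * (x - 1/2))).comp x h1).congr_deriv (mul_comm _ _)

lemma tf'_hasDeriv (lam x : ℝ) :
    HasDerivAt (fun z => lam * Real.sinh (lam * (z - 1/2)))
      (lam ^ 2 * Real.cosh (lam * (x - 1/2))) x := by
  have h1 : HasDerivAt (fun z : ℝ => lam * (z - 1/2)) lam x := by
    exact (((hasDerivAt_id x).sub_const (1/2)).const_mul lam).congr_deriv (by ring)
  have h2 := ((Real.hasDerivAt_sinh (lam * (x - 1/2))).comp x h1).const_mul lam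
  exact h2.congr_deriv (by ring)

set_option maxHeartbeats 1000000 in
lemma key_lemma (lam c m : ℝ) (hc : 0 < c) (hc1 : c ≤ 1) (hlam : 0 < lam) (hm : m < 0)
    (bs bo yo : ℝ → ℝ) (y y' y'' : ℝ → ℝ)
    (hbo : ∀ x ∈ Set.Icc (0:ℝ) 1, bo x ≤ 0)
    (hbs : ∀ x ∈ Set.Icc (0:ℝ) 1, lam ^ 2 < bs x + bo x)
    (a β γ δ : ℝ) (ha : 0 ≤ a) (hβ : 0 ≤ β) (haβ : 0 < a + β) (hγ : 0 < γ) (hδ : 0 ≤ δ)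
    (hyd : ∀ x ∈ Set.Icc (0:ℝ) 1, HasDerivAt y (y' x) x)
    (hydd : ∀ x ∈ Set.Ioo (0:ℝ) 1, HasDerivAt y' (y'' x) x)
    (hR0 : 0 ≤ a * y 0 - c * β * y' 0) (hR1 : 0 ≤ γ * y 1 + c * δ * y' 1)
    (hL : ∀ x ∈ Set.Ioo (0:ℝ) 1, 0 ≤ -c ^ 2 * y'' x + bs x * y x + bo x * yo x)
    (x0 : ℝ) (hx0 : x0 ∈ Set.Icc (0:ℝ) 1)
    (hxm : y x0 = m * Real.cosh (lam * (x0 - 1/2)))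
    (hlow : ∀ x ∈ Set.Icc (0:ℝ) 1, m * Real.cosh (lam * (x - 1/2)) ≤ y x)
    (hlowo : m * Real.cosh (lam * (x0 - 1/2)) ≤ yo x0) : False := by
  set g : ℝ → ℝ := fun z => y z - m * Real.cosh (lam * (z - 1/2)) with hgdef
  have hgd : ∀ z ∈ Set.Icc (0:ℝ) 1,
      HasDerivAt g (y' z - m * (lam * Real.sinh (lam * (z - 1/2)))) z := fun z hz =>
    (hyd z hz).sub ((tf_hasDeriv lam z).const_mul m)
  have hg0 : g x0 = 0 := by simp [hgdef, hxm]
  have hgmin : ∀ z ∈ Set.Icc (0:ℝ) 1, g x0 ≤ g z := by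
    intro z hz
    rw [hg0]
    have := hlow z hz
    simp only [hgdef]
    linarith
  have hS : 0 < Real.sinh (lam / 2) := Real.sinh_pos_iff.mpr (by linarith)
  have hC : 0 < Real.cosh (lam / 2) := Real.cosh_pos _
  obtain ⟨hx0l, hx0r⟩ := hx0
  rcases eq_or_lt_of_le hx0l with h0 | h0
  · -- x0 = 0
    subst h0
    have hdn := deriv_nonneg_left g _ (hgd 0 ⟨le_refl _, zero_le_one⟩) hgmin
    have harg : lam * ((0:ℝ) - 1/2) = -(lam / 2) := by ring
    have hsinh0 : Real.sinh (lam * ((0:ℝ) - 1/2)) = -Real.sinh (lam / 2) := by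
      rw [harg, Real.sinh_neg]
    have hy0 : y 0 = m * Real.cosh (lam / 2) := by
      rw [hxm, harg, Real.cosh_neg]
    rw [hsinh0] at hdn
    -- hdn : 0 ≤ y' 0 - m * (lam * -sinh(lam/2))
    have hy'0 : -(m * (lam * Real.sinh (lam / 2))) ≤ y' 0 := by linarith
    have hterm : c * β * (-(m * (lam * Real.sinh (lam / 2)))) ≤ c * β * y' 0 :=
      mul_le_mul_of_nonneg_left hy'0 (by positivity)
    have hpos : 0 < a * Real.cosh (lam / 2) + c * β * (lam * Real.sinh (lam / 2)) := by
      rcases ha.lt_or_eq with h | h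
      · have h1 : 0 < a * Real.cosh (lam / 2) := mul_pos h hC
        have h2 : 0 ≤ c * β * (lam * Real.sinh (lam / 2)) := by positivity
        linarith
      · have hβp : 0 < β := by linarith
        have h1 : 0 < c * β * (lam * Real.sinh (lam / 2)) := by positivity
        nlinarith [mul_nonneg ha hC.le]
    nlinarith [mul_neg_of_neg_of_pos hm hpos, hR0, hterm, hy0]
  · rcases eq_or_lt_of_le hx0r with h1 | h1
    · -- x0 = 1
      subst h1
      have hdn := deriv_nonpos_right g _ (hgd 1 ⟨zero_le_one, le_refl _⟩) hgmin
      have harg : lam * ((1:ℝ) - 1/2) = lam / 2 := by ring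
      rw [harg] at hdn
      have hy1 : y 1 = m * Real.cosh (lam / 2) := by rw [hxm, harg]
      have hy'1 : y' 1 ≤ m * (lam * Real.sinh (lam / 2)) := by linarith
      have hterm : c * δ * y' 1 ≤ c * δ * (m * (lam * Real.sinh (lam / 2))) :=
        mul_le_mul_of_nonneg_left hy'1 (by positivity)
      have h6 : γ * (m * Real.cosh (lam / 2)) < 0 :=
        mul_neg_of_pos_of_neg hγ (mul_neg_of_neg_of_pos hm hC)
      have h7 : c * δ * (m * (lam * Real.sinh (lam / 2))) ≤ 0 :=
        mul_nonpos_of_nonneg_of_nonpos (by positivity)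
          (by nlinarith [mul_pos hlam hS])
      nlinarith [hR1, hterm, h6, h7, hy1]
    · -- interior
      have hxo : x0 ∈ Set.Ioo (0:ℝ) 1 := ⟨h0, h1⟩
      set T : ℝ := Real.cosh (lam * (x0 - 1/2)) with hTdef
      have hT : 0 < T := Real.cosh_pos _
      have hgdd : HasDerivAt (fun z => y' z - m * (lam * Real.sinh (lam * (z - 1/2))))
          (y'' x0 - m * (lam ^ 2 * T)) x0 :=
        (hydd x0 hxo).sub ((tf'_hasDeriv lam x0).const_mul m)
      have hsec : 0 ≤ y'' x0 - m * (lam ^ 2 * T) :=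
        second_deriv_nonneg g _ _ x0 hxo
          (fun z hz => hgd z ⟨hz.1.le, hz.2.le⟩) hgdd hgmin
      have hL0 := hL x0 hxo
      have hbo0 := hbo x0 ⟨hx0l, hx0r⟩
      have hbs0 := hbs x0 ⟨hx0l, hx0r⟩
      have hyole : bo x0 * yo x0 ≤ bo x0 * (m * T) :=
        mul_le_mul_of_nonpos_left hlowo hbo0
      have hcc : c ^ 2 ≤ 1 := by nlinarith
      have hc2 : c ^ 2 * lam ^ 2 ≤ lam ^ 2 := by nlinarith [sq_nonneg lam, hcc]
      have hsplit : lam ^ 2 < bs x0 + bo x0 := hbs0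
      rw [hxm] at hL0
      have h8 : (-c ^ 2) * y'' x0 ≤ (-c ^ 2) * (m * (lam ^ 2 * T)) :=
        mul_le_mul_of_nonpos_left (by linarith) (neg_nonpos_of_nonneg (sq_nonneg c))
      have h9 : 0 ≤ m * T * (bs x0 + bo x0 - c ^ 2 * lam ^ 2) := by
        nlinarith [hL0, h8, hyole]
      have h10 : m * T * (bs x0 + bo x0 - c ^ 2 * lam ^ 2) < 0 :=
        mul_neg_of_neg_of_pos (mul_neg_of_neg_of_pos hm hT) (by linarith)
      linarith


theorem stmt_15 (ε μ lam : ℝ) (hε : 0 < ε) (hε1 : ε ≤ 1) (hεμ : ε ≤ μ) (hμ1 : μ ≤ 1)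
    (b11 b12 b21 b22 : ℝ → ℝ)
    (hb11 : ContinuousOn b11 (Set.Icc 0 1)) (hb12 : ContinuousOn b12 (Set.Icc 0 1))
    (hb21 : ContinuousOn b21 (Set.Icc 0 1)) (hb22 : ContinuousOn b22 (Set.Icc 0 1))
    (h12 : ∀ x ∈ Set.Icc (0 : ℝ) 1, b12 x ≤ 0)
    (h21 : ∀ x ∈ Set.Icc (0 : ℝ) 1, b21 x ≤ 0)
    (hlam : 0 < lam)
    (hmin : ∀ x ∈ Set.Icc (0 : ℝ) 1,
      lam ^ 2 < min (b11 x + b12 x) (b21 x + b22 x))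
    (α₁ α₂ β₁ β₂ γ₁ γ₂ δ₁ δ₂ : ℝ)
    (hα₁ : 0 ≤ α₁) (hα₂ : 0 ≤ α₂) (hβ₁ : 0 ≤ β₁) (hβ₂ : 0 ≤ β₂)
    (hαβ₁ : 0 < α₁ + β₁) (hαβ₂ : 0 < α₂ + β₂)
    (hγ₁ : 0 < γ₁) (hγ₂ : 0 < γ₂) (hδ₁ : 0 ≤ δ₁) (hδ₂ : 0 ≤ δ₂)
    (y₁ y₂ y₁' y₂' y₁'' y₂'' : ℝ → ℝ)
    (hy₁c : ContinuousOn y₁ (Set.Icc 0 1)) (hy₂c : ContinuousOn y₂ (Set.Icc 0 1))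
    (hy₁d : ∀ x ∈ Set.Icc (0 : ℝ) 1, HasDerivAt y₁ (y₁' x) x)
    (hy₂d : ∀ x ∈ Set.Icc (0 : ℝ) 1, HasDerivAt y₂ (y₂' x) x)
    (hy₁dd : ∀ x ∈ Set.Ioo (0 : ℝ) 1, HasDerivAt y₁' (y₁'' x) x)
    (hy₂dd : ∀ x ∈ Set.Ioo (0 : ℝ) 1, HasDerivAt y₂' (y₂'' x) x)
    (hR10 : 0 ≤ α₁ * y₁ 0 - ε * β₁ * y₁' 0)
    (hR20 : 0 ≤ α₂ * y₂ 0 - μ * β₂ * y₂' 0)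
    (hR11 : 0 ≤ γ₁ * y₁ 1 + ε * δ₁ * y₁' 1)
    (hR21 : 0 ≤ γ₂ * y₂ 1 + μ * δ₂ * y₂' 1)
    (hL1 : ∀ x ∈ Set.Ioo (0 : ℝ) 1,
      0 ≤ -ε ^ 2 * y₁'' x + b11 x * y₁ x + b12 x * y₂ x)
    (hL2 : ∀ x ∈ Set.Ioo (0 : ℝ) 1,
      0 ≤ -μ ^ 2 * y₂'' x + b21 x * y₁ x + b22 x * y₂ x) :
    ∀ x ∈ Set.Icc (0 : ℝ) 1, 0 ≤ y₁ x ∧ 0 ≤ y₂ x := by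
  have hμ : 0 < μ := lt_of_lt_of_le hε hεμ
  have htpos : ∀ z : ℝ, 0 < Real.cosh (lam * (z - 1/2)) := fun z => Real.cosh_pos _
  have htc : Continuous fun z : ℝ => Real.cosh (lam * (z - 1/2)) :=
    Real.continuous_cosh.comp (by continuity)
  have hwc : ContinuousOn (fun z => min (y₁ z / Real.cosh (lam * (z - 1/2)))
      (y₂ z / Real.cosh (lam * (z - 1/2)))) (Set.Icc 0 1) :=
    fun z hz =>
      ((hy₁c.div htc.continuousOn fun w _ => (htpos w).ne') z hz).min
        ((hy₂c.div htc.continuousOn fun w _ => (htpos w).ne') z hz)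
  obtain ⟨x0, hx0, hmin0⟩ :=
    isCompact_Icc.exists_isMinOn (Set.nonempty_Icc.mpr zero_le_one) hwc
  replace hmin0 := isMinOn_iff.mp hmin0
  set m : ℝ := min (y₁ x0 / Real.cosh (lam * (x0 - 1/2)))
      (y₂ x0 / Real.cosh (lam * (x0 - 1/2))) with hmdef
  by_cases hm : 0 ≤ m
  · intro x hx
    have h := hmin0 x hx
    constructor
    · have h1 : 0 ≤ y₁ x / Real.cosh (lam * (x - 1/2)) :=
        le_trans (le_trans hm h) (min_le_left _ _)
      have h2 := (le_div_iff₀ (htpos x)).mp h1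
      linarith [h2]
    · have h1 : 0 ≤ y₂ x / Real.cosh (lam * (x - 1/2)) :=
        le_trans (le_trans hm h) (min_le_right _ _)
      have h2 := (le_div_iff₀ (htpos x)).mp h1
      linarith [h2]
  · push_neg at hm
    exfalso
    have hlow1 : ∀ x ∈ Set.Icc (0:ℝ) 1, m * Real.cosh (lam * (x - 1/2)) ≤ y₁ x := by
      intro x hx
      exact (le_div_iff₀ (htpos x)).mp (le_trans (hmin0 x hx) (min_le_left _ _))
    have hlow2 : ∀ x ∈ Set.Icc (0:ℝ) 1, m * Real.cosh (lam * (x - 1/2)) ≤ y₂ x := by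
      intro x hx
      exact (le_div_iff₀ (htpos x)).mp (le_trans (hmin0 x hx) (min_le_right _ _))
    rcases min_cases (y₁ x0 / Real.cosh (lam * (x0 - 1/2)))
        (y₂ x0 / Real.cosh (lam * (x0 - 1/2))) with ⟨heq, _⟩ | ⟨heq, _⟩
    · have hxm1 : y₁ x0 = m * Real.cosh (lam * (x0 - 1/2)) :=
        ((eq_div_iff (htpos x0).ne').mp (hmdef.trans heq)).symm
      exact key_lemma lam ε m hε hε1 hlam hm b11 b12 y₂ y₁ y₁' y₁''
        h12 (fun x hx => lt_of_lt_of_le (hmin x hx) (min_le_left _ _))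
        α₁ β₁ γ₁ δ₁ hα₁ hβ₁ hαβ₁ hγ₁ hδ₁ hy₁d hy₁dd hR10 hR11 hL1
        x0 hx0 hxm1 hlow1 (hlow2 x0 hx0)
    · have hxm2 : y₂ x0 = m * Real.cosh (lam * (x0 - 1/2)) :=
        ((eq_div_iff (htpos x0).ne').mp (hmdef.trans heq)).symm
      exact key_lemma lam μ m hμ hμ1 hlam hm b22 b21 y₁ y₂ y₂' y₂''
        h21 (fun x hx => by linarith [lt_of_lt_of_le (hmin x hx) (min_le_right _ _)])
        α₂ β₂ γ₂ δ₂ hα₂ hβ₂ hαβ₂ hγ₂ hδ₂ hy₂d hy₂dd hR20 hR21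
        (fun x hx => by linarith [hL2 x hx])
        x0 hx0 hxm2 hlow2 (hlow1 x0 hx0)
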